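/- With the linear forms ℓ_1,…,ℓ_r, the set S, and the sets U_j(α,β), U_j(α), U(α) as in the context, let p ∉ S be a prime, ψ a standard additive character of ℚ_p, fix 1 ≤ k ≤ r, and let a = (a_1,a_2) ∈ ℤ² \ {0} be proportional to (a_k,b_k) (i.e. a_1 b_k = a_2 a_k) with p not dividing gcd(a_1,a_2). Then: (i) for every j ≠ k and all α > β ≥ 1, ∫_{U_j(α,β)} ψ_a dμ = 0; (ii) for every j ≠ k, ∫_{U_j(α)} ψ_a dμ = −1 if α = 1 and = 0 if α ≥ 2; (iii) ∫_{U(α)} ψ_a dμ = −(p+1−r) if α = 1 and = 0 if α ≥ 2. -/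

import Mathlib

open MeasureTheory

noncomputable instance (p : ℕ) [Fact p.Prime] : MeasurableSpace ℚ_[p] := borel _
instance (p : ℕ) [Fact p.Prime] : BorelSpace ℚ_[p] := ⟨rfl⟩

open ENNReal

namespace St12

variable {p : ℕ} [hp : Fact p.Prime]

lemma norm_int_one {m : ℤ} (h : ¬ ((p:ℤ) ∣ m)) : ‖(m : ℚ_[p])‖ = 1 := by
  rcases lt_or_eq_of_le (Padic.norm_int_le_one (p := p) m) with h1 | h1
  · exact absurd (Padic.norm_intCast_lt_one_iff.1 h1) h
  · exact h1

lemma lin_le (u v x y : ℚ_[p]) (hu : ‖u‖ ≤ 1) (hv : ‖v‖ ≤ 1) :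
    ‖u * x + v * y‖ ≤ max ‖x‖ ‖y‖ := by
  refine le_trans (Padic.nonarchimedean _ _) (max_le_max ?_ ?_) <;>
    · rw [norm_mul]
      nlinarith [norm_nonneg x, norm_nonneg y, norm_nonneg u, norm_nonneg v]

lemma unimod_norm (e f g h : ℤ) (hd : ¬ ((p:ℤ) ∣ (e*h - f*g))) (x y : ℚ_[p]) :
    max ‖(e:ℚ_[p]) * x + (f:ℚ_[p]) * y‖ ‖(g:ℚ_[p]) * x + (h:ℚ_[p]) * y‖ = max ‖x‖ ‖y‖ := by
  have hD1 : ‖((e*h - f*g : ℤ) : ℚ_[p])‖ = 1 := norm_int_one hd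
  set D : ℚ_[p] := ((e*h - f*g : ℤ) : ℚ_[p]) with hDdef
  have hD0 : D ≠ 0 := by
    intro h0; rw [h0] at hD1; simp at hD1
  set u := (e:ℚ_[p]) * x + (f:ℚ_[p]) * y with hu
  set v := (g:ℚ_[p]) * x + (h:ℚ_[p]) * y with hv
  apply le_antisymm
  · exact max_le (lin_le _ _ _ _ (Padic.norm_int_le_one e) (Padic.norm_int_le_one f))
      (lin_le _ _ _ _ (Padic.norm_int_le_one g) (Padic.norm_int_le_one h))
  · have hx : x = (D⁻¹ * (h:ℚ_[p])) * u + (D⁻¹ * (-(f:ℚ_[p]))) * v := by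
      have key : D * x = (h:ℚ_[p]) * u + (-(f:ℚ_[p])) * v := by
        rw [hu, hv, hDdef]; push_cast; ring
      calc x = D⁻¹ * (D * x) := by rw [← mul_assoc, inv_mul_cancel₀ hD0, one_mul]
      _ = _ := by rw [key]; ring
    have hy : y = (D⁻¹ * (-(g:ℚ_[p]))) * u + (D⁻¹ * (e:ℚ_[p])) * v := by
      have key : D * y = (-(g:ℚ_[p])) * u + (e:ℚ_[p]) * v := by
        rw [hu, hv, hDdef]; push_cast; ring
      calc y = D⁻¹ * (D * y) := by rw [← mul_assoc, inv_mul_cancel₀ hD0, one_mul]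
      _ = _ := by rw [key]; ring
    have hnc : ∀ w : ℤ, ‖D⁻¹ * (w : ℚ_[p])‖ ≤ 1 := by
      intro w
      rw [norm_mul, norm_inv, hD1, inv_one, one_mul]
      exact Padic.norm_int_le_one w
    have hnc' : ∀ w : ℤ, ‖D⁻¹ * (-(w : ℚ_[p]))‖ ≤ 1 := by
      intro w
      rw [norm_mul, norm_inv, hD1, inv_one, one_mul, norm_neg]
      exact Padic.norm_int_le_one w
    have h1 : ‖x‖ ≤ max ‖u‖ ‖v‖ := by
      rw [hx]; exact lin_le _ _ _ _ (hnc h) (hnc' f)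
    have h2 : ‖y‖ ≤ max ‖u‖ ‖v‖ := by
      rw [hy]; exact lin_le _ _ _ _ (hnc' g) (hnc e)
    exact max_le h1 h2



variable (p : ℕ) [hp : Fact p.Prime]

lemma ball_eq : {v : ℚ_[p] | ‖v‖ ≤ 1} = Metric.closedBall 0 1 := by
  ext v; simp [Metric.mem_closedBall, dist_zero_right]

def Kball : TopologicalSpace.PositiveCompacts ℚ_[p] where
  carrier := {v | ‖v‖ ≤ 1}
  isCompact' := by rw [ball_eq]; exact isCompact_closedBall 0 1
  interior_nonempty' := by
    show (interior {v : ℚ_[p] | ‖v‖ ≤ 1}).Nonempty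
    rw [ball_eq, IsOpen.interior_eq (IsUltrametricDist.isOpen_closedBall 0 one_ne_zero)]
    exact ⟨0, by simp⟩

noncomputable def lam : Measure ℚ_[p] := Measure.addHaarMeasure (Kball p)

instance : (lam p).IsAddHaarMeasure := Measure.isAddHaarMeasure_addHaarMeasure _
instance : SigmaFinite (lam p) := by unfold lam; infer_instance

lemma lam_unit : lam p {v : ℚ_[p] | ‖v‖ ≤ 1} = 1 := Measure.addHaarMeasure_self

lemma prodZ_eq : {x : ℚ_[p] × ℚ_[p] | ‖x.1‖ ≤ 1 ∧ ‖x.2‖ ≤ 1}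
    = {v : ℚ_[p] | ‖v‖ ≤ 1} ×ˢ {v : ℚ_[p] | ‖v‖ ≤ 1} := rfl

lemma measurable_unit : MeasurableSet {x : ℚ_[p] × ℚ_[p] | ‖x.1‖ ≤ 1 ∧ ‖x.2‖ ≤ 1} := by
  have : IsClosed {x : ℚ_[p] × ℚ_[p] | ‖x.1‖ ≤ 1 ∧ ‖x.2‖ ≤ 1} := by
    apply IsClosed.inter
    · exact isClosed_le (continuous_fst.norm) continuous_const
    · exact isClosed_le (continuous_snd.norm) continuous_const
  exact this.measurableSet

lemma prodlam_unit : ((lam p).prod (lam p)) {x : ℚ_[p] × ℚ_[p] | ‖x.1‖ ≤ 1 ∧ ‖x.2‖ ≤ 1} = 1 := by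
  rw [prodZ_eq, Measure.prod_prod, lam_unit, one_mul]

lemma haar_eq_haar {μ ν : Measure (ℚ_[p] × ℚ_[p])} (hμ : μ.IsAddHaarMeasure)
    (hν : ν.IsAddHaarMeasure)
    (h1 : μ {x : ℚ_[p] × ℚ_[p] | ‖x.1‖ ≤ 1 ∧ ‖x.2‖ ≤ 1} = 1)
    (h2 : ν {x : ℚ_[p] × ℚ_[p] | ‖x.1‖ ≤ 1 ∧ ‖x.2‖ ≤ 1} = 1) : μ = ν := by
  haveI := hμ; haveI := hν
  have key := Measure.isAddLeftInvariant_eq_smul μ ν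
  have h3 : (Measure.addHaarScalarFactor μ ν • ν)
      {x : ℚ_[p] × ℚ_[p] | ‖x.1‖ ≤ 1 ∧ ‖x.2‖ ≤ 1} = 1 := by rw [← key]; exact h1
  have hc : μ.addHaarScalarFactor ν = 1 := by
    have h4 := h3
    rw [Measure.smul_apply, h2] at h4
    simpa [ENNReal.smul_def] using h4
  rw [key, hc, one_smul]

noncomputable def Tmap (e f g h : ℤ) : ℚ_[p] × ℚ_[p] → ℚ_[p] × ℚ_[p] :=
  fun x => ((e:ℚ_[p]) * x.1 + (f:ℚ_[p]) * x.2, (g:ℚ_[p]) * x.1 + (h:ℚ_[p]) * x.2)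

lemma Tmap_cont (e f g h : ℤ) : Continuous (Tmap p e f g h) := by
  unfold Tmap; fun_prop

lemma det_ne_zero {e f g h : ℤ} (hd : ¬ ((p:ℤ) ∣ (e*h - f*g))) :
    ((e*h - f*g : ℤ) : ℚ_[p]) ≠ 0 := by
  intro h0
  have : ‖((e*h - f*g : ℤ) : ℚ_[p])‖ = 1 := norm_int_one hd
  rw [h0] at this; simp at this

noncomputable def Thomeo (e f g h : ℤ) (hd : ¬ ((p:ℤ) ∣ (e*h - f*g))) :
    (ℚ_[p] × ℚ_[p]) ≃ₜ (ℚ_[p] × ℚ_[p]) where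
  toFun := Tmap p e f g h
  invFun := fun y => (((e*h - f*g : ℤ):ℚ_[p])⁻¹ * ((h:ℚ_[p]) * y.1 - (f:ℚ_[p]) * y.2),
    ((e*h - f*g : ℤ):ℚ_[p])⁻¹ * ((e:ℚ_[p]) * y.2 - (g:ℚ_[p]) * y.1))
  left_inv := by
    intro x
    have hD0 := det_ne_zero (p := p) hd
    have key1 : (h:ℚ_[p]) * ((e:ℚ_[p]) * x.1 + (f:ℚ_[p]) * x.2)
        - (f:ℚ_[p]) * ((g:ℚ_[p]) * x.1 + (h:ℚ_[p]) * x.2)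
        = ((e*h - f*g : ℤ):ℚ_[p]) * x.1 := by push_cast; ring
    have key2 : (e:ℚ_[p]) * ((g:ℚ_[p]) * x.1 + (h:ℚ_[p]) * x.2)
        - (g:ℚ_[p]) * ((e:ℚ_[p]) * x.1 + (f:ℚ_[p]) * x.2)
        = ((e*h - f*g : ℤ):ℚ_[p]) * x.2 := by push_cast; ring
    simp only [Tmap]
    exact Prod.ext (by rw [key1, inv_mul_cancel_left₀ hD0])
      (by rw [key2, inv_mul_cancel_left₀ hD0])
  right_inv := by
    intro y
    have hD0 := det_ne_zero (p := p) hd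
    have hcalc1 : (e:ℚ_[p]) * (((e*h-f*g:ℤ):ℚ_[p])⁻¹ * ((h:ℚ_[p]) * y.1 - (f:ℚ_[p]) * y.2))
        + (f:ℚ_[p]) * (((e*h-f*g:ℤ):ℚ_[p])⁻¹ * ((e:ℚ_[p]) * y.2 - (g:ℚ_[p]) * y.1))
        = ((e*h-f*g:ℤ):ℚ_[p])⁻¹ * (((e*h-f*g:ℤ):ℚ_[p]) * y.1) := by push_cast; ring
    have hcalc2 : (g:ℚ_[p]) * (((e*h-f*g:ℤ):ℚ_[p])⁻¹ * ((h:ℚ_[p]) * y.1 - (f:ℚ_[p]) * y.2))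
        + (h:ℚ_[p]) * (((e*h-f*g:ℤ):ℚ_[p])⁻¹ * ((e:ℚ_[p]) * y.2 - (g:ℚ_[p]) * y.1))
        = ((e*h-f*g:ℤ):ℚ_[p])⁻¹ * (((e*h-f*g:ℤ):ℚ_[p]) * y.2) := by push_cast; ring
    simp only [Tmap]
    exact Prod.ext (by rw [hcalc1, inv_mul_cancel_left₀ hD0])
      (by rw [hcalc2, inv_mul_cancel_left₀ hD0])
  continuous_toFun := Tmap_cont p e f g h
  continuous_invFun := by fun_prop

noncomputable def Taddequiv (e f g h : ℤ) (hd : ¬ ((p:ℤ) ∣ (e*h - f*g))) :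
    (ℚ_[p] × ℚ_[p]) ≃+ (ℚ_[p] × ℚ_[p]) :=
  { (Thomeo p e f g h hd).toEquiv with
    map_add' := by
      intro x y
      show Tmap p e f g h (x + y) = Tmap p e f g h x + Tmap p e f g h y
      simp only [Tmap, Prod.fst_add, Prod.snd_add, Prod.mk_add_mk]
      exact Prod.ext (by ring) (by ring) }

lemma Tmap_measurePreserving (e f g h : ℤ) (hd : ¬ ((p:ℤ) ∣ (e*h - f*g)))
    (μ : Measure (ℚ_[p] × ℚ_[p])) (hμ : μ.IsAddHaarMeasure)
    (hμ1 : μ {x : ℚ_[p] × ℚ_[p] | ‖x.1‖ ≤ 1 ∧ ‖x.2‖ ≤ 1} = 1) :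
    MeasurePreserving (Tmap p e f g h) μ ((lam p).prod (lam p)) := by
  haveI := hμ
  have hcont := Tmap_cont p e f g h
  have hmeas := hcont.measurable
  refine ⟨hmeas, ?_⟩
  have hco : Continuous (Taddequiv p e f g h hd) := hcont
  have hco' : Continuous (Taddequiv p e f g h hd).symm := (Thomeo p e f g h hd).continuous_invFun
  have hH : (μ.map (Taddequiv p e f g h hd)).IsAddHaarMeasure :=
    (Taddequiv p e f g h hd).isAddHaarMeasure_map μ hco hco'
  have hval : (μ.map (Tmap p e f g h)) {x : ℚ_[p] × ℚ_[p] | ‖x.1‖ ≤ 1 ∧ ‖x.2‖ ≤ 1} = 1 := by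
    rw [Measure.map_apply hmeas (measurable_unit p)]
    have hpre : Tmap p e f g h ⁻¹' {x : ℚ_[p] × ℚ_[p] | ‖x.1‖ ≤ 1 ∧ ‖x.2‖ ≤ 1}
        = {x : ℚ_[p] × ℚ_[p] | ‖x.1‖ ≤ 1 ∧ ‖x.2‖ ≤ 1} := by
      ext x
      simp only [Set.mem_preimage, Set.mem_setOf_eq, Tmap]
      rw [← max_le_iff, ← max_le_iff, unimod_norm e f g h hd]
    rw [hpre, hμ1]
  exact haar_eq_haar p hH inferInstance hval (prodlam_unit p)

lemma transfer (e f g h : ℤ) (hd : ¬ ((p:ℤ) ∣ (e*h - f*g)))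
    (μ : Measure (ℚ_[p] × ℚ_[p])) (hμ : μ.IsAddHaarMeasure)
    (hμ1 : μ {x : ℚ_[p] × ℚ_[p] | ‖x.1‖ ≤ 1 ∧ ‖x.2‖ ≤ 1} = 1)
    (F : ℚ_[p] × ℚ_[p] → ℂ) (s : Set (ℚ_[p] × ℚ_[p])) :
    ∫ x in Tmap p e f g h ⁻¹' s, F (Tmap p e f g h x) ∂μ
      = ∫ z in s, F z ∂((lam p).prod (lam p)) :=
  (Tmap_measurePreserving p e f g h hd μ hμ hμ1).setIntegral_preimage_emb
    ((Thomeo p e f g h hd).toMeasurableEquiv.measurableEmbedding) F s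


/-! ### One-variable layer -/

def Zb (n : ℕ) : Set ℚ_[p] := {v | ‖v‖ ≤ (p : ℝ) ^ n}

def Sb (n : ℕ) : Set ℚ_[p] := {v | ‖v‖ = (p : ℝ) ^ n}

lemma Zb_zero : Zb p 0 = {v : ℚ_[p] | ‖v‖ ≤ 1} := by simp [Zb]

lemma Zb_closed (n : ℕ) : IsClosed (Zb p n) := isClosed_le continuous_norm continuous_const

lemma Zb_meas (n : ℕ) : MeasurableSet (Zb p n) := (Zb_closed p n).measurableSet

lemma Zb_compact (n : ℕ) : IsCompact (Zb p n) := by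
  have : Zb p n = Metric.closedBall 0 ((p:ℝ)^n) := by
    ext v; simp [Zb, Metric.mem_closedBall, dist_zero_right]
  rw [this]; exact isCompact_closedBall _ _

lemma Sb_closed (n : ℕ) : IsClosed (Sb p n) := isClosed_eq continuous_norm continuous_const

lemma Sb_meas (n : ℕ) : MeasurableSet (Sb p n) := (Sb_closed p n).measurableSet

lemma norm_le_pred_iff_lt (v : ℚ_[p]) (n : ℕ) (hn : 1 ≤ n) :
    ‖v‖ ≤ (p:ℝ)^(n-1) ↔ ‖v‖ < (p:ℝ)^n := by
  have h1 : ((p:ℝ)^(n-1:ℕ)) = (p:ℝ)^((n:ℤ)-1) := by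
    rw [← zpow_natCast]; congr 1; omega
  have h2 : ((p:ℝ)^(n:ℕ)) = (p:ℝ)^((n:ℤ)-1+1) := by
    rw [← zpow_natCast]; congr 1; omega
  rw [h1, h2, Padic.norm_le_pow_iff_norm_lt_pow_add_one]

lemma Sb_eq_diff (n : ℕ) (hn : 1 ≤ n) : Sb p n = Zb p n \ Zb p (n-1) := by
  ext v
  simp only [Sb, Zb, Set.mem_setOf_eq, Set.mem_diff]
  constructor
  · intro hv
    refine ⟨le_of_eq hv, fun hle => ?_⟩
    have := (norm_le_pred_iff_lt p v n hn).1 hle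
    rw [hv] at this; exact lt_irrefl _ this
  · rintro ⟨h1, h2⟩
    have := (norm_le_pred_iff_lt p v n hn).not.1 h2
    push_neg at this
    exact le_antisymm h1 this

lemma Zb_fin (n : ℕ) : lam p (Zb p n) ≠ ⊤ := (Zb_compact p n).measure_lt_top.ne

lemma Zb_translate {t : ℚ_[p]} {n : ℕ} (ht : ‖t‖ ≤ (p:ℝ)^n) :
    (fun v => t + v) ⁻¹' (Zb p n) = Zb p n := by
  ext v
  simp only [Set.mem_preimage, Zb, Set.mem_setOf_eq]
  constructor
  · intro hv
    have : v = (t + v) + (-t) := by ring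
    rw [this]
    refine le_trans (Padic.nonarchimedean _ _) (max_le hv ?_)
    rwa [norm_neg]
  · intro hv
    exact le_trans (Padic.nonarchimedean _ _) (max_le ht hv)

lemma lam_translate (t : ℚ_[p]) (F : ℚ_[p] → ℂ) (s : Set ℚ_[p]) :
    ∫ v in (fun v => t + v) ⁻¹' s, F (t + v) ∂(lam p) = ∫ v in s, F v ∂(lam p) :=
  (measurePreserving_add_left (lam p) t).setIntegral_preimage_emb
    (Homeomorph.addLeft t).toMeasurableEquiv.measurableEmbedding F s

lemma J_zero (ψ : ℚ_[p] → ℂ) (hψtriv : ∀ x : ℚ_[p], ‖x‖ ≤ 1 → ψ x = 1) (m : ℤ) :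
    ∫ v in Zb p 0, ψ ((m:ℚ_[p]) * v) ∂(lam p) = 1 := by
  have : ∀ v ∈ Zb p 0, ψ ((m:ℚ_[p]) * v) = 1 := by
    intro v hv
    apply hψtriv
    rw [norm_mul]
    calc ‖(m:ℚ_[p])‖ * ‖v‖ ≤ 1 * 1 := by
          apply mul_le_mul (Padic.norm_int_le_one m) ?_ (norm_nonneg v) zero_le_one
          simpa [Zb] using hv
    _ = 1 := by norm_num
  rw [setIntegral_congr_fun (Zb_meas p 0) this, setIntegral_const, Zb_zero, measureReal_def, lam_unit]
  simp

lemma J_pos (ψ : ℚ_[p] → ℂ) (hψadd : ∀ x y : ℚ_[p], ψ (x + y) = ψ x * ψ y)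
    (x₀ : ℚ_[p]) (hx₀ : ‖x₀‖ ≤ (p:ℝ)) (hx₀' : ψ x₀ ≠ 1)
    (m : ℤ) (hm : ¬ ((p:ℤ) ∣ m)) (n : ℕ) (hn : 1 ≤ n) :
    ∫ v in Zb p n, ψ ((m:ℚ_[p]) * v) ∂(lam p) = 0 := by
  have hm1 : ‖(m:ℚ_[p])‖ = 1 := norm_int_one hm
  have hmne : (m:ℚ_[p]) ≠ 0 := by intro h0; rw [h0] at hm1; simp at hm1
  set t : ℚ_[p] := (m:ℚ_[p])⁻¹ * x₀ with htdef
  have hmt : (m:ℚ_[p]) * t = x₀ := by rw [htdef, mul_inv_cancel_left₀ hmne]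
  have ht : ‖t‖ ≤ (p:ℝ)^n := by
    rw [htdef, norm_mul, norm_inv, hm1, inv_one, one_mul]
    calc ‖x₀‖ ≤ (p:ℝ) := hx₀
    _ = (p:ℝ)^1 := (pow_one _).symm
    _ ≤ (p:ℝ)^n := by
        apply pow_le_pow_right₀ ?_ hn
        exact_mod_cast hp.out.one_lt.le
  have key : ∫ v in Zb p n, ψ ((m:ℚ_[p]) * v) ∂(lam p)
      = ψ x₀ * ∫ v in Zb p n, ψ ((m:ℚ_[p]) * v) ∂(lam p) := by
    have e1 := lam_translate p t (fun v => ψ ((m:ℚ_[p]) * v)) (Zb p n)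
    rw [Zb_translate p ht] at e1
    calc ∫ v in Zb p n, ψ ((m:ℚ_[p]) * v) ∂(lam p)
        = ∫ v in Zb p n, ψ ((m:ℚ_[p]) * (t + v)) ∂(lam p) := e1.symm
    _ = ∫ v in Zb p n, ψ x₀ * ψ ((m:ℚ_[p]) * v) ∂(lam p) := by
        congr 1; ext v
        rw [mul_add, hψadd, hmt]
    _ = ψ x₀ * ∫ v in Zb p n, ψ ((m:ℚ_[p]) * v) ∂(lam p) := by
        rw [integral_const_mul]
  have h2 : (ψ x₀ - 1) * ∫ v in Zb p n, ψ ((m:ℚ_[p]) * v) ∂(lam p) = 0 := by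
    rw [sub_mul, one_mul, ← key, sub_self]
  rcases mul_eq_zero.1 h2 with h | h
  · exact absurd (sub_eq_zero.1 h) hx₀'
  · exact h

lemma Zb_mono {n m : ℕ} (h : n ≤ m) : Zb p n ⊆ Zb p m := by
  intro v hv
  simp only [Zb, Set.mem_setOf_eq] at hv ⊢
  exact le_trans hv (pow_le_pow_right₀ (by exact_mod_cast hp.out.one_lt.le) h)

lemma J_integrable (ψ : ℚ_[p] → ℂ) (hψcont : Continuous ψ) (m : ℤ) (n : ℕ) :
    IntegrableOn (fun v => ψ ((m:ℚ_[p]) * v)) (Zb p n) (lam p) :=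
  ((hψcont.comp (continuous_const.mul continuous_id)).continuousOn).integrableOn_compact
    (Zb_compact p n)

lemma J_sph (ψ : ℚ_[p] → ℂ) (hψcont : Continuous ψ)
    (hψadd : ∀ x y : ℚ_[p], ψ (x + y) = ψ x * ψ y)
    (hψtriv : ∀ x : ℚ_[p], ‖x‖ ≤ 1 → ψ x = 1)
    (x₀ : ℚ_[p]) (hx₀ : ‖x₀‖ ≤ (p:ℝ)) (hx₀' : ψ x₀ ≠ 1)
    (m : ℤ) (hm : ¬ ((p:ℤ) ∣ m)) (n : ℕ) (hn : 1 ≤ n) :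
    ∫ v in Sb p n, ψ ((m:ℚ_[p]) * v) ∂(lam p) = if n = 1 then -1 else 0 := by
  rw [Sb_eq_diff p n hn,
    integral_diff (Zb_meas p (n-1)) (J_integrable p ψ hψcont m n) (Zb_mono p (Nat.sub_le n 1)),
    J_pos p ψ hψadd x₀ hx₀ hx₀' m hm n hn]
  rcases eq_or_lt_of_le hn with h1 | h1
  · rw [← h1]
    norm_num [J_zero p ψ hψtriv m]
  · have h2 : 1 ≤ n - 1 := by omega
    rw [J_pos p ψ hψadd x₀ hx₀ hx₀' m hm (n-1) h2, if_neg (by omega)]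
    norm_num

lemma exists_repr (u : ℚ_[p]) (hu : ‖u‖ ≤ 1) :
    ∃ i : ℕ, i < p ∧ ‖u - (i:ℚ_[p])‖ ≤ ((p:ℝ))⁻¹ := by
  set z : ℤ_[p] := ⟨u, hu⟩ with hz
  refine ⟨PadicInt.zmodRepr z, PadicInt.zmodRepr_lt_p z, ?_⟩
  have h1 := PadicInt.sub_zmodRepr_mem z
  rw [PadicInt.maximalIdeal_eq_span_p, Ideal.mem_span_singleton,
    ← PadicInt.norm_lt_one_iff_dvd] at h1
  have h2 : ‖u - ((PadicInt.zmodRepr z : ℕ) : ℚ_[p])‖ < 1 := by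
    have hcoe : ((z - ((PadicInt.zmodRepr z : ℕ) : ℤ_[p]) : ℤ_[p]) : ℚ_[p])
        = u - ((PadicInt.zmodRepr z : ℕ):ℚ_[p]) := by
      rw [PadicInt.coe_sub, PadicInt.coe_natCast]
    rw [← hcoe, ← PadicInt.norm_def]
    exact h1
  have h3 : ((p:ℝ))⁻¹ = (p:ℝ)^(-1 : ℤ) := by
    rw [zpow_neg, zpow_one]
  rw [h3, Padic.norm_le_pow_iff_norm_lt_pow_add_one]
  simpa using h2

lemma coset_meas (c : ℚ_[p]) : MeasurableSet {v : ℚ_[p] | ‖v - c‖ ≤ 1} :=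
  (isClosed_le ((continuous_id.sub continuous_const).norm) continuous_const).measurableSet

lemma lam_coset (c : ℚ_[p]) : lam p {v : ℚ_[p] | ‖v - c‖ ≤ 1} = 1 := by
  have hpre : {v : ℚ_[p] | ‖v - c‖ ≤ 1} = (fun v => (-c) + v) ⁻¹' {v : ℚ_[p] | ‖v‖ ≤ 1} := by
    ext v
    simp only [Set.mem_preimage, Set.mem_setOf_eq, neg_add_eq_sub]
  rw [hpre, measure_preimage_add, lam_unit]

lemma lam_Zb_one : lam p (Zb p 1) = p := by
  have hplt : (1:ℝ) < p := by exact_mod_cast hp.out.one_lt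
  have hppos : (0:ℝ) < p := by linarith
  have hnp : ‖(p:ℚ_[p])‖ = (p:ℝ)⁻¹ := Padic.norm_p
  have hcover : Zb p 1 = ⋃ i ∈ Finset.range p,
      {v : ℚ_[p] | ‖v - (i:ℚ_[p]) * ((p:ℚ_[p]))⁻¹‖ ≤ 1} := by
    ext v
    simp only [Set.mem_iUnion, Finset.mem_range, Set.mem_setOf_eq, Zb, exists_prop]
    constructor
    · intro hv
      rw [pow_one] at hv
      obtain ⟨i, hip, hiu⟩ := exists_repr p ((p:ℚ_[p]) * v) (by
        rw [norm_mul, hnp]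
        calc (p:ℝ)⁻¹ * ‖v‖ ≤ (p:ℝ)⁻¹ * p := by
              apply mul_le_mul_of_nonneg_left hv (by positivity)
        _ = 1 := inv_mul_cancel₀ (ne_of_gt hppos))
      refine ⟨i, hip, ?_⟩
      have hid : v - (i:ℚ_[p]) * ((p:ℚ_[p]))⁻¹ = ((p:ℚ_[p]))⁻¹ * ((p:ℚ_[p]) * v - (i:ℚ_[p])) := by
        have hpne : (p:ℚ_[p]) ≠ 0 := by
          intro h0; rw [h0] at hnp; simp at hnp; linarith
        field_simp
      rw [hid, norm_mul, norm_inv, hnp, inv_inv]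
      calc (p:ℝ) * ‖(p:ℚ_[p]) * v - (i:ℚ_[p])‖ ≤ (p:ℝ) * (p:ℝ)⁻¹ :=
            mul_le_mul_of_nonneg_left hiu (le_of_lt hppos)
      _ = 1 := mul_inv_cancel₀ (ne_of_gt hppos)
    · rintro ⟨i, hip, hiu⟩
      rw [pow_one]
      have hc : ‖(i:ℚ_[p]) * ((p:ℚ_[p]))⁻¹‖ ≤ (p:ℝ) := by
        rw [norm_mul, norm_inv, hnp, inv_inv]
        have hni : ‖((i:ℕ):ℚ_[p])‖ ≤ 1 := by
          have := Padic.norm_int_le_one (p := p) (i:ℤ)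
          rwa [Int.cast_natCast] at this
        nlinarith [norm_nonneg ((i:ℕ):ℚ_[p])]
      have hvdec : v = (v - (i:ℚ_[p]) * ((p:ℚ_[p]))⁻¹) + (i:ℚ_[p]) * ((p:ℚ_[p]))⁻¹ := by ring
      rw [hvdec]
      exact le_trans (Padic.nonarchimedean _ _)
        (max_le (le_trans hiu (by linarith)) hc)
  rw [hcover, measure_biUnion_finset ?_ (fun i _ => coset_meas p _)]
  · simp only [lam_coset, Finset.sum_const, Finset.card_range, nsmul_eq_mul, mul_one]
  · intro i hi j hj hij
    simp only [Finset.mem_coe, Finset.mem_range] at hi hj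
    rw [Function.onFun, Set.disjoint_left]
    intro v hvi hvj
    simp only [Set.mem_setOf_eq] at hvi hvj
    have hdiff : (i:ℚ_[p]) * ((p:ℚ_[p]))⁻¹ - (j:ℚ_[p]) * ((p:ℚ_[p]))⁻¹
        = (v - (j:ℚ_[p]) * ((p:ℚ_[p]))⁻¹) - (v - (i:ℚ_[p]) * ((p:ℚ_[p]))⁻¹) := by ring
    have hle : ‖(i:ℚ_[p]) * ((p:ℚ_[p]))⁻¹ - (j:ℚ_[p]) * ((p:ℚ_[p]))⁻¹‖ ≤ 1 := by
      rw [hdiff]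
      rw [sub_eq_add_neg]
      refine le_trans (Padic.nonarchimedean _ _) (max_le hvj ?_)
      rwa [norm_neg]
    have hdvd : ¬ ((p:ℤ) ∣ ((i:ℤ) - (j:ℤ))) := by
      intro hd
      have habs : |(i:ℤ) - (j:ℤ)| < (p:ℤ) := by
        rw [abs_lt]; omega
      have := Int.eq_zero_of_abs_lt_dvd hd habs
      omega
    have heq : (i:ℚ_[p]) * ((p:ℚ_[p]))⁻¹ - (j:ℚ_[p]) * ((p:ℚ_[p]))⁻¹
        = (((i:ℤ) - (j:ℤ) : ℤ):ℚ_[p]) * ((p:ℚ_[p]))⁻¹ := by push_cast; ring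
    have hnval : ‖(i:ℚ_[p]) * ((p:ℚ_[p]))⁻¹ - (j:ℚ_[p]) * ((p:ℚ_[p]))⁻¹‖ = (p:ℝ) := by
      rw [heq, norm_mul, norm_inv, hnp, inv_inv, norm_int_one hdvd, one_mul]
    rw [hnval] at hle
    linarith

lemma lam_Sb_one : lam p (Sb p 1) = (p:ℝ≥0∞) - 1 := by
  have h0 : (1:ℕ) - 1 = 0 := rfl
  rw [Sb_eq_diff p 1 le_rfl, h0,
    measure_diff (Zb_mono p (Nat.zero_le 1)) ((Zb_meas p 0).nullMeasurableSet) (Zb_fin p 0),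
    lam_Zb_one, Zb_zero, lam_unit]

lemma lam_Sb_one_toReal : (lam p (Sb p 1)).toReal = (p:ℝ) - 1 := by
  rw [lam_Sb_one, ENNReal.toReal_sub_of_le ?_ (ENNReal.natCast_ne_top p)]
  · simp
  · exact_mod_cast hp.out.one_lt.le

/-! ### Product-side helpers -/

lemma prod_integral (F : ℚ_[p] → ℂ) (A B : Set ℚ_[p]) :
    ∫ z in A ×ˢ B, F z.2 ∂((lam p).prod (lam p))
      = ((lam p A).toReal : ℂ) * ∫ v in B, F v ∂(lam p) := by
  have h := setIntegral_prod_mul (μ := lam p) (ν := lam p) (fun _ => (1:ℂ)) F A B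
  simp only [one_mul] at h
  rw [h, setIntegral_const, measureReal_def]
  simp

lemma eval_prod (e f g h : ℤ) (hd : ¬ ((p:ℤ) ∣ (e*h - f*g)))
    (μ : Measure (ℚ_[p] × ℚ_[p])) (hμ : μ.IsAddHaarMeasure)
    (hμ1 : μ {x : ℚ_[p] × ℚ_[p] | ‖x.1‖ ≤ 1 ∧ ‖x.2‖ ≤ 1} = 1)
    (ψ : ℚ_[p] → ℂ) (m : ℤ) (A B : Set ℚ_[p]) :
    ∫ x in Tmap p e f g h ⁻¹' (A ×ˢ B),
        ψ ((m:ℚ_[p]) * ((g:ℚ_[p]) * x.1 + (h:ℚ_[p]) * x.2)) ∂μ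
      = ((lam p A).toReal : ℂ) * ∫ v in B, ψ ((m:ℚ_[p]) * v) ∂(lam p) := by
  have ht := transfer p e f g h hd μ hμ hμ1 (fun z => ψ ((m:ℚ_[p]) * z.2)) (A ×ˢ B)
  have he : ∫ x in Tmap p e f g h ⁻¹' (A ×ˢ B),
      ψ ((m:ℚ_[p]) * ((g:ℚ_[p]) * x.1 + (h:ℚ_[p]) * x.2)) ∂μ
      = ∫ x in Tmap p e f g h ⁻¹' (A ×ˢ B),
        (fun z => ψ ((m:ℚ_[p]) * z.2)) (Tmap p e f g h x) ∂μ := rfl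
  rw [he, ht]
  exact prod_integral p (fun v => ψ ((m:ℚ_[p]) * v)) A B

/-! ### Set shapes -/

lemma ppow_lt {γ α : ℕ} (h : γ < α) : (p:ℝ)^γ < (p:ℝ)^α :=
  pow_lt_pow_right₀ (by exact_mod_cast hp.out.one_lt) h

lemma shape_eq (e f g h : ℤ) (hd : ¬ ((p:ℤ) ∣ (e*h - f*g))) (α γ : ℕ)
    (hγ : (p:ℝ)^γ < (p:ℝ)^α) :
    {x : ℚ_[p] × ℚ_[p] | max ‖x.1‖ ‖x.2‖ = (p:ℝ)^α
        ∧ ‖(e:ℚ_[p]) * x.1 + (f:ℚ_[p]) * x.2‖ = (p:ℝ)^γ}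
      = Tmap p e f g h ⁻¹' (Sb p γ ×ˢ Sb p α) := by
  ext x
  have hmax := unimod_norm e f g h hd x.1 x.2
  simp only [Set.mem_setOf_eq, Set.mem_preimage, Set.mem_prod, Tmap, Sb]
  constructor
  · rintro ⟨h1, h2⟩
    refine ⟨h2, ?_⟩
    have hM : max ‖(e:ℚ_[p]) * x.1 + (f:ℚ_[p]) * x.2‖ ‖(g:ℚ_[p]) * x.1 + (h:ℚ_[p]) * x.2‖
        = (p:ℝ)^α := hmax.trans h1
    rcases max_choice ‖(e:ℚ_[p]) * x.1 + (f:ℚ_[p]) * x.2‖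
        ‖(g:ℚ_[p]) * x.1 + (h:ℚ_[p]) * x.2‖ with hc | hc
    · rw [hc, h2] at hM
      exact absurd hM (ne_of_lt hγ)
    · rw [hc] at hM
      exact hM
  · rintro ⟨h1, h2⟩
    refine ⟨?_, h1⟩
    rw [← hmax, h1, h2, max_eq_right (le_of_lt hγ)]

lemma shape_le (e f g h : ℤ) (hd : ¬ ((p:ℤ) ∣ (e*h - f*g))) (α δ : ℕ)
    (hδ : (p:ℝ)^δ < (p:ℝ)^α) :
    {x : ℚ_[p] × ℚ_[p] | max ‖x.1‖ ‖x.2‖ = (p:ℝ)^α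
        ∧ ‖(e:ℚ_[p]) * x.1 + (f:ℚ_[p]) * x.2‖ ≤ (p:ℝ)^δ}
      = Tmap p e f g h ⁻¹' (Zb p δ ×ˢ Sb p α) := by
  ext x
  have hmax := unimod_norm e f g h hd x.1 x.2
  simp only [Set.mem_setOf_eq, Set.mem_preimage, Set.mem_prod, Tmap, Sb, Zb]
  constructor
  · rintro ⟨h1, h2⟩
    refine ⟨h2, ?_⟩
    have hM : max ‖(e:ℚ_[p]) * x.1 + (f:ℚ_[p]) * x.2‖ ‖(g:ℚ_[p]) * x.1 + (h:ℚ_[p]) * x.2‖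
        = (p:ℝ)^α := hmax.trans h1
    rcases max_choice ‖(e:ℚ_[p]) * x.1 + (f:ℚ_[p]) * x.2‖
        ‖(g:ℚ_[p]) * x.1 + (h:ℚ_[p]) * x.2‖ with hc | hc
    · rw [hc] at hM
      rw [hM] at h2
      exact absurd h2 (not_le.mpr hδ)
    · rw [hc] at hM
      exact hM
  · rintro ⟨h1, h2⟩
    refine ⟨?_, h1⟩
    rw [← hmax, h2, max_eq_right (h1.trans hδ.le)]

lemma shape_le' (e f g h : ℤ) (hd : ¬ ((p:ℤ) ∣ (e*h - f*g))) (α δ : ℕ)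
    (hδ : (p:ℝ)^δ < (p:ℝ)^α) :
    {x : ℚ_[p] × ℚ_[p] | max ‖x.1‖ ‖x.2‖ = (p:ℝ)^α
        ∧ ‖(g:ℚ_[p]) * x.1 + (h:ℚ_[p]) * x.2‖ ≤ (p:ℝ)^δ}
      = Tmap p e f g h ⁻¹' (Sb p α ×ˢ Zb p δ) := by
  ext x
  have hmax := unimod_norm e f g h hd x.1 x.2
  simp only [Set.mem_setOf_eq, Set.mem_preimage, Set.mem_prod, Tmap, Sb, Zb]
  constructor
  · rintro ⟨h1, h2⟩
    refine ⟨?_, h2⟩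
    have hM : max ‖(e:ℚ_[p]) * x.1 + (f:ℚ_[p]) * x.2‖ ‖(g:ℚ_[p]) * x.1 + (h:ℚ_[p]) * x.2‖
        = (p:ℝ)^α := hmax.trans h1
    rcases max_choice ‖(e:ℚ_[p]) * x.1 + (f:ℚ_[p]) * x.2‖
        ‖(g:ℚ_[p]) * x.1 + (h:ℚ_[p]) * x.2‖ with hc | hc
    · rw [hc] at hM
      exact hM
    · rw [hc] at hM
      rw [hM] at h2
      exact absurd h2 (not_le.mpr hδ)
  · rintro ⟨h1, h2⟩
    refine ⟨?_, h2⟩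
    rw [← hmax, h1, max_eq_left (h2.trans hδ.le)]

lemma shape_max (e f g h : ℤ) (hd : ¬ ((p:ℤ) ∣ (e*h - f*g))) (α : ℕ) (hα : 1 ≤ α) :
    {x : ℚ_[p] × ℚ_[p] | max ‖x.1‖ ‖x.2‖ = (p:ℝ)^α}
      = Tmap p e f g h ⁻¹' ((Zb p α ×ˢ Zb p α) \ (Zb p (α-1) ×ˢ Zb p (α-1))) := by
  ext x
  have hmax := unimod_norm e f g h hd x.1 x.2
  have hlt : (p:ℝ)^(α-1) < (p:ℝ)^α := ppow_lt p (by omega : α - 1 < α)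
  simp only [Set.mem_setOf_eq, Set.mem_preimage, Set.mem_prod, Set.mem_diff, Tmap, Zb]
  constructor
  · intro h1
    have hM : max ‖(e:ℚ_[p]) * x.1 + (f:ℚ_[p]) * x.2‖ ‖(g:ℚ_[p]) * x.1 + (h:ℚ_[p]) * x.2‖
        = (p:ℝ)^α := hmax.trans h1
    refine ⟨⟨le_trans (le_max_left _ _) hM.le, le_trans (le_max_right _ _) hM.le⟩, ?_⟩
    rintro ⟨ha, hb⟩
    have hle : max ‖(e:ℚ_[p]) * x.1 + (f:ℚ_[p]) * x.2‖ ‖(g:ℚ_[p]) * x.1 + (h:ℚ_[p]) * x.2‖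
        ≤ (p:ℝ)^(α-1) := max_le ha hb
    rw [hM] at hle
    linarith
  · rintro ⟨⟨ha, hb⟩, hn⟩
    rw [← hmax]
    rcases not_and_or.1 hn with hcase | hcase
    · have hge := (norm_le_pred_iff_lt p ((e:ℚ_[p]) * x.1 + (f:ℚ_[p]) * x.2) α hα).not.1 hcase
      push_neg at hge
      have h1 : ‖(e:ℚ_[p]) * x.1 + (f:ℚ_[p]) * x.2‖ = (p:ℝ)^α := le_antisymm ha hge
      rw [max_eq_left (hb.trans (le_of_eq h1.symm)), h1]
    · have hge := (norm_le_pred_iff_lt p ((g:ℚ_[p]) * x.1 + (h:ℚ_[p]) * x.2) α hα).not.1 hcase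
      push_neg at hge
      have h1 : ‖(g:ℚ_[p]) * x.1 + (h:ℚ_[p]) * x.2‖ = (p:ℝ)^α := le_antisymm hb hge
      rw [max_eq_right (ha.trans (le_of_eq h1.symm)), h1]

lemma prod_integral_char (ψ : ℚ_[p] → ℂ) (m : ℤ) (A B : Set ℚ_[p]) :
    ∫ z in A ×ˢ B, ψ ((m:ℚ_[p]) * z.2) ∂((lam p).prod (lam p))
      = ((lam p A).toReal : ℂ) * ∫ v in B, ψ ((m:ℚ_[p]) * v) ∂(lam p) :=
  prod_integral p (fun v => ψ ((m:ℚ_[p]) * v)) A B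

lemma eval_set (e f g h : ℤ) (hd : ¬ ((p:ℤ) ∣ (e*h - f*g)))
    (μ : Measure (ℚ_[p] × ℚ_[p])) (hμ : μ.IsAddHaarMeasure)
    (hμ1 : μ {x : ℚ_[p] × ℚ_[p] | ‖x.1‖ ≤ 1 ∧ ‖x.2‖ ≤ 1} = 1)
    (ψ : ℚ_[p] → ℂ) (m : ℤ) (s : Set (ℚ_[p] × ℚ_[p])) :
    ∫ x in Tmap p e f g h ⁻¹' s,
        ψ ((m:ℚ_[p]) * ((g:ℚ_[p]) * x.1 + (h:ℚ_[p]) * x.2)) ∂μ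
      = ∫ z in s, ψ ((m:ℚ_[p]) * z.2) ∂((lam p).prod (lam p)) :=
  transfer p e f g h hd μ hμ hμ1 (fun z => ψ ((m:ℚ_[p]) * z.2)) s

end St12

open St12

/-- `U_j(α,β) = {x ∈ ℚ_p² : ‖x‖_p = p^α, |a x₁ + b x₂|_p = p^(α-β)}`. -/
def Uab (p : ℕ) [Fact p.Prime] (a b : ℤ) (α β : ℕ) : Set (ℚ_[p] × ℚ_[p]) :=
  {x | max ‖x.1‖ ‖x.2‖ = (p : ℝ) ^ α ∧
    ‖(a : ℚ_[p]) * x.1 + (b : ℚ_[p]) * x.2‖ = (p : ℝ) ^ (α - β)}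

/-- `U_j(α) = {x ∈ ℚ_p² : ‖x‖_p = p^α, |a x₁ + b x₂|_p ≤ 1}`. -/
def Ua (p : ℕ) [Fact p.Prime] (a b : ℤ) (α : ℕ) : Set (ℚ_[p] × ℚ_[p]) :=
  {x | max ‖x.1‖ ‖x.2‖ = (p : ℝ) ^ α ∧ ‖(a : ℚ_[p]) * x.1 + (b : ℚ_[p]) * x.2‖ ≤ 1}

/-- `U(α) = {x ∈ ℚ_p² : ‖x‖_p = p^α, |ℓ_i(x)|_p = p^α for all i}`. -/
def Utot (p : ℕ) [Fact p.Prime] {r : ℕ} (a b : Fin r → ℤ) (α : ℕ) :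
    Set (ℚ_[p] × ℚ_[p]) :=
  {x | max ‖x.1‖ ‖x.2‖ = (p : ℝ) ^ α ∧
    ∀ i, ‖(a i : ℚ_[p]) * x.1 + (b i : ℚ_[p]) * x.2‖ = (p : ℝ) ^ α}

/-- Integrals of a character special for `ℓ_k` over the pieces
`U_j(α,β)`, `U_j(α)` (`j ≠ k`) and `U(α)` at a prime `p` of good reduction. -/
theorem stmt12 (r : ℕ) (hr : 1 ≤ r) (a b : Fin r → ℤ)
    (hprim : ∀ k, Int.gcd (a k) (b k) = 1)
    (hnonprop : ∀ j k, j ≠ k → a j * b k - a k * b j ≠ 0)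
    (p : ℕ) [Fact p.Prime]
    (hpS : ∀ j k, j ≠ k → ¬ ((p : ℤ) ∣ (a j * b k - a k * b j)))
    (μ : Measure (ℚ_[p] × ℚ_[p])) (hμ : μ.IsAddHaarMeasure)
    (hμ1 : μ {x | ‖x.1‖ ≤ 1 ∧ ‖x.2‖ ≤ 1} = 1)
    (ψ : ℚ_[p] → ℂ) (hψcont : Continuous ψ)
    (hψadd : ∀ x y : ℚ_[p], ψ (x + y) = ψ x * ψ y)
    (hψabs : ∀ x : ℚ_[p], ‖ψ x‖ = 1)
    (hψtriv : ∀ x : ℚ_[p], ‖x‖ ≤ 1 → ψ x = 1)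
    (hψnontriv : ∃ x : ℚ_[p], ‖x‖ ≤ (p : ℝ) ∧ ψ x ≠ 1)
    (k : Fin r) (c : ℤ × ℤ) (hc0 : c ≠ 0)
    (hspec : c.1 * b k = c.2 * a k)
    (hcp : ¬ ((p : ℤ) ∣ c.1 ∧ (p : ℤ) ∣ c.2)) :
    (∀ j, j ≠ k → ∀ α β : ℕ, 1 ≤ β → β < α →
      ∫ x in Uab p (a j) (b j) α β,
        ψ ((c.1 : ℚ_[p]) * x.1 + (c.2 : ℚ_[p]) * x.2) ∂μ = 0) ∧
    (∀ j, j ≠ k →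
      (∫ x in Ua p (a j) (b j) 1,
        ψ ((c.1 : ℚ_[p]) * x.1 + (c.2 : ℚ_[p]) * x.2) ∂μ = -1) ∧
      (∀ α : ℕ, 2 ≤ α →
        ∫ x in Ua p (a j) (b j) α,
          ψ ((c.1 : ℚ_[p]) * x.1 + (c.2 : ℚ_[p]) * x.2) ∂μ = 0)) ∧
    ((∫ x in Utot p a b 1,
        ψ ((c.1 : ℚ_[p]) * x.1 + (c.2 : ℚ_[p]) * x.2) ∂μ =
          -((p : ℂ) + 1 - (r : ℂ))) ∧
     (∀ α : ℕ, 2 ≤ α →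
        ∫ x in Utot p a b α,
          ψ ((c.1 : ℚ_[p]) * x.1 + (c.2 : ℚ_[p]) * x.2) ∂μ = 0)) := by
    classical
  haveI := hμ
  obtain ⟨x₀, hx₀, hx₀'⟩ := hψnontriv
  have hp2 : (2:ℤ) ≤ (p:ℤ) := by exact_mod_cast (Fact.out : p.Prime).two_le
  have hbez : (a k) * Int.gcdA (a k) (b k) + (b k) * Int.gcdB (a k) (b k) = 1 := by
    have h1 := Int.gcd_eq_gcd_ab (a k) (b k)
    rw [hprim k] at h1
    exact_mod_cast h1.symm
  set m : ℤ := c.1 * Int.gcdA (a k) (b k) + c.2 * Int.gcdB (a k) (b k) with hmdef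
  have hma : m * a k = c.1 := by
    rw [hmdef]; linear_combination Int.gcdB (a k) (b k) * hspec.symm + c.1 * hbez
  have hmb : m * b k = c.2 := by
    rw [hmdef]; linear_combination Int.gcdA (a k) (b k) * hspec + c.2 * hbez
  have hmp : ¬ ((p:ℤ) ∣ m) := by
    intro hd
    exact hcp ⟨by rw [← hma]; exact hd.mul_right _, by rw [← hmb]; exact hd.mul_right _⟩
  have hint : ∀ x : ℚ_[p] × ℚ_[p], ψ ((c.1:ℚ_[p]) * x.1 + (c.2:ℚ_[p]) * x.2)
      = ψ ((m:ℚ_[p]) * ((a k : ℚ_[p]) * x.1 + (b k : ℚ_[p]) * x.2)) := by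
    intro x
    congr 1
    rw [show (c.1:ℚ_[p]) = (m:ℚ_[p]) * (a k:ℚ_[p]) by rw [← hma]; push_cast; ring,
        show (c.2:ℚ_[p]) = (m:ℚ_[p]) * (b k:ℚ_[p]) by rw [← hmb]; push_cast; ring]
    ring
  have hdjk : ∀ j : Fin r, j ≠ k → ¬ ((p:ℤ) ∣ (a j * b k - b j * a k)) := by
    intro j hj hdvd
    apply hpS j k hj
    rwa [mul_comm (b j) (a k)] at hdvd
  set e₀ : ℤ := - Int.gcdB (a k) (b k) with he0
  set f₀ : ℤ := Int.gcdA (a k) (b k) with hf0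
  have hd0 : ¬ ((p:ℤ) ∣ (e₀ * b k - f₀ * a k)) := by
    have hdet : e₀ * b k - f₀ * a k = -1 := by rw [he0, hf0]; linarith [hbez]
    rw [hdet]
    intro hdvd
    have h2 : (p:ℤ) ∣ 1 := dvd_neg.mp hdvd
    have h3 := Int.le_of_dvd one_pos h2
    omega
  have hJS : ∀ αv : ℕ, 1 ≤ αv →
      ∫ v in Sb p αv, ψ ((m:ℚ_[p]) * v) ∂(lam p) = if αv = 1 then -1 else 0 :=
    fun αv hαv => J_sph p ψ hψcont hψadd hψtriv x₀ hx₀ hx₀' m hmp αv hαv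
  refine ⟨?_, ?_, ?_⟩
  · -- part (i)
    intro j hjk α β hβ hα
    simp_rw [hint]
    have hUab : Uab p (a j) (b j) α β
        = Tmap p (a j) (b j) (a k) (b k) ⁻¹' (Sb p (α-β) ×ˢ Sb p α) :=
      shape_eq p (a j) (b j) (a k) (b k) (hdjk j hjk) α (α-β) (ppow_lt p (by omega))
    rw [hUab, eval_set p (a j) (b j) (a k) (b k) (hdjk j hjk) μ hμ hμ1 ψ m _,
      prod_integral_char p ψ m _ _, hJS α (by omega), if_neg (by omega), mul_zero]
  · -- part (ii)
    intro j hjk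
    constructor
    · simp_rw [hint]
      have hUa : Ua p (a j) (b j) 1
          = Tmap p (a j) (b j) (a k) (b k) ⁻¹' (Zb p 0 ×ˢ Sb p 1) := by
        rw [← shape_le p (a j) (b j) (a k) (b k) (hdjk j hjk) 1 0 (ppow_lt p one_pos)]
        ext x; simp [Ua]
      rw [hUa, eval_set p (a j) (b j) (a k) (b k) (hdjk j hjk) μ hμ hμ1 ψ m _,
        prod_integral_char p ψ m _ _, hJS 1 le_rfl, if_pos rfl, Zb_zero, lam_unit]
      norm_num
    · intro α hα2
      simp_rw [hint]
      have hUa : Ua p (a j) (b j) α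
          = Tmap p (a j) (b j) (a k) (b k) ⁻¹' (Zb p 0 ×ˢ Sb p α) := by
        rw [← shape_le p (a j) (b j) (a k) (b k) (hdjk j hjk) α 0 (ppow_lt p (by omega))]
        ext x; simp [Ua]
      rw [hUa, eval_set p (a j) (b j) (a k) (b k) (hdjk j hjk) μ hμ hμ1 ψ m _,
        prod_integral_char p ψ m _ _, hJS α (by omega), if_neg (by omega), mul_zero]
  · -- part (iii)
    have hfc : Continuous (fun x : ℚ_[p] × ℚ_[p] =>
        ψ ((m:ℚ_[p]) * ((a k:ℚ_[p]) * x.1 + (b k:ℚ_[p]) * x.2))) :=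
      hψcont.comp (by fun_prop)
    have hUtot : ∀ α : ℕ, 1 ≤ α →
        (∫ x in Utot p a b α,
            ψ ((m:ℚ_[p]) * ((a k:ℚ_[p]) * x.1 + (b k:ℚ_[p]) * x.2)) ∂μ)
          = (if α = 1 then -((p:ℂ) + 1 - (r:ℂ)) else 0) := by
      intro α hα
      set W : Set (ℚ_[p] × ℚ_[p]) := {x | max ‖x.1‖ ‖x.2‖ = (p:ℝ)^α} with hWdef
      set Bi : Fin r → Set (ℚ_[p] × ℚ_[p]) := fun i =>
        {x | max ‖x.1‖ ‖x.2‖ = (p:ℝ)^α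
          ∧ ‖(a i:ℚ_[p]) * x.1 + (b i:ℚ_[p]) * x.2‖ ≤ (p:ℝ)^(α-1)} with hBidef
      have hWeq : W = Tmap p e₀ f₀ (a k) (b k) ⁻¹'
          ((Zb p α ×ˢ Zb p α) \ (Zb p (α-1) ×ˢ Zb p (α-1))) := by
        rw [hWdef]
        exact shape_max p e₀ f₀ (a k) (b k) hd0 α hα
      have hBiW : ∀ i, Bi i ⊆ W := fun i x hx => hx.1
      have hUW : Utot p a b α ⊆ W := fun x hx => hx.1
      have hcl : IsClosed W :=
        isClosed_eq (continuous_fst.norm.max continuous_snd.norm) continuous_const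
      have hWb : W ⊆ Metric.closedBall 0 ((p:ℝ)^α) := by
        intro x hx
        rw [Metric.mem_closedBall]
        have hdd : dist x 0 = max ‖x.1‖ ‖x.2‖ := by
          rw [Prod.dist_eq]
          simp [dist_zero_right]
        rw [hdd, hx]
      have hWcomp : IsCompact W :=
        (isCompact_closedBall (0 : ℚ_[p] × ℚ_[p]) _).of_isClosed_subset hcl hWb
      have hBicl : ∀ i, IsClosed (Bi i) := fun i =>
        (isClosed_eq (continuous_fst.norm.max continuous_snd.norm) continuous_const).inter
          (isClosed_le (Continuous.norm (by fun_prop)) continuous_const)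
      have hBicomp : ∀ i, IsCompact (Bi i) := fun i =>
        hWcomp.of_isClosed_subset (hBicl i) (hBiW i)
      have hUcl : IsClosed (Utot p a b α) := by
        have hU : Utot p a b α = {x : ℚ_[p] × ℚ_[p] | max ‖x.1‖ ‖x.2‖ = (p:ℝ)^α}
            ∩ ⋂ i, {x : ℚ_[p] × ℚ_[p] |
              ‖(a i:ℚ_[p]) * x.1 + (b i:ℚ_[p]) * x.2‖ = (p:ℝ)^α} := by
          ext x
          simp [Utot, Set.mem_iInter]
        rw [hU]
        exact (isClosed_eq (continuous_fst.norm.max continuous_snd.norm) continuous_const).inter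
          (isClosed_iInter fun i => isClosed_eq (Continuous.norm (by fun_prop)) continuous_const)
      have hUcomp : IsCompact (Utot p a b α) := hWcomp.of_isClosed_subset hUcl hUW
      have hBim : ∀ i, MeasurableSet (Bi i) := fun i => (hBicl i).measurableSet
      have hInt : ∀ s : Set (ℚ_[p] × ℚ_[p]), IsCompact s →
          IntegrableOn (fun x => ψ ((m:ℚ_[p]) * ((a k:ℚ_[p]) * x.1 + (b k:ℚ_[p]) * x.2))) s μ :=
        fun s hs => (hfc.continuousOn).integrableOn_compact hs
      have hunion : W = Utot p a b α ∪ ⋃ i, Bi i := by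
        ext x
        simp only [hWdef, hBidef, Utot, Set.mem_setOf_eq, Set.mem_union, Set.mem_iUnion]
        constructor
        · intro hx
          by_cases hall : ∀ i, ‖(a i:ℚ_[p]) * x.1 + (b i:ℚ_[p]) * x.2‖ = (p:ℝ)^α
          · exact Or.inl ⟨hx, hall⟩
          · push_neg at hall
            obtain ⟨i, hi⟩ := hall
            refine Or.inr ⟨i, hx, ?_⟩
            have hle : ‖(a i:ℚ_[p]) * x.1 + (b i:ℚ_[p]) * x.2‖ ≤ (p:ℝ)^α := by
              rw [← hx]
              exact lin_le _ _ _ _ (Padic.norm_int_le_one (a i))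
                (Padic.norm_int_le_one (b i))
            exact (norm_le_pred_iff_lt p _ α hα).2 (lt_of_le_of_ne hle hi)
        · rintro (hx | hx)
          · exact hx.1
          · obtain ⟨i, hi⟩ := hx
            exact hi.1
      have hdisj1 : Disjoint (Utot p a b α) (⋃ i, Bi i) := by
        rw [Set.disjoint_left]
        intro x hxU hxB
        simp only [hBidef, Set.mem_iUnion, Set.mem_setOf_eq] at hxB
        obtain ⟨i, _, hi2⟩ := hxB
        obtain ⟨_, hxU2⟩ := hxU
        rw [hxU2 i] at hi2
        exact absurd hi2 (not_le.mpr (ppow_lt p (by omega)))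
      have hpair : ∀ i j : Fin r, i ≠ j → Disjoint (Bi i) (Bi j) := by
        intro i j hij
        rw [Set.disjoint_left]
        intro x hxi hxj
        simp only [hBidef, Set.mem_setOf_eq] at hxi hxj
        have hdij : ¬ ((p:ℤ) ∣ (a i * b j - b i * a j)) := by
          intro hdvd
          apply hpS i j hij
          rwa [mul_comm (b i) (a j)] at hdvd
        have hmax := unimod_norm (a i) (b i) (a j) (b j) hdij x.1 x.2
        have hcontra : (p:ℝ)^α ≤ (p:ℝ)^(α-1) := by
          rw [← hxi.1, ← hmax]
          exact max_le hxi.2 hxj.2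
        exact absurd hcontra (not_le.mpr (ppow_lt p (by omega)))
      have hdec : ∫ x in W, ψ ((m:ℚ_[p]) * ((a k:ℚ_[p]) * x.1 + (b k:ℚ_[p]) * x.2)) ∂μ
          = (∫ x in Utot p a b α,
              ψ ((m:ℚ_[p]) * ((a k:ℚ_[p]) * x.1 + (b k:ℚ_[p]) * x.2)) ∂μ)
            + ∑ i, ∫ x in Bi i,
              ψ ((m:ℚ_[p]) * ((a k:ℚ_[p]) * x.1 + (b k:ℚ_[p]) * x.2)) ∂μ := by
        rw [hunion, setIntegral_union hdisj1 (MeasurableSet.iUnion fun i => hBim i)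
          (hInt _ hUcomp) (hInt _ (isCompact_iUnion fun i => hBicomp i))]
        congr 1
        rw [show (⋃ i, Bi i) = ⋃ i ∈ Finset.univ, Bi i by simp]
        exact integral_biUnion_finset Finset.univ (fun i _ => hBim i)
          (fun i _ j _ hij => hpair i j hij) (fun i _ => hInt _ (hBicomp i))
      have hW : ∫ x in W, ψ ((m:ℚ_[p]) * ((a k:ℚ_[p]) * x.1 + (b k:ℚ_[p]) * x.2)) ∂μ
          = if α = 1 then -1 else 0 := by
        have hIprod : IntegrableOn (fun z : ℚ_[p] × ℚ_[p] => ψ ((m:ℚ_[p]) * z.2))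
            (Zb p α ×ˢ Zb p α) ((lam p).prod (lam p)) :=
          ((hψcont.comp (show Continuous fun z : ℚ_[p] × ℚ_[p] => (m:ℚ_[p]) * z.2
            by fun_prop)).continuousOn).integrableOn_compact
            ((Zb_compact p α).prod (Zb_compact p α))
        rw [hWeq, eval_set p e₀ f₀ (a k) (b k) hd0 μ hμ hμ1 ψ m _,
          integral_diff ((Zb_meas p (α-1)).prod (Zb_meas p (α-1))) hIprod
            (Set.prod_mono (Zb_mono p (by omega)) (Zb_mono p (by omega))),
          prod_integral_char p ψ m (Zb p α) (Zb p α),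
          prod_integral_char p ψ m (Zb p (α-1)) (Zb p (α-1))]
        rcases eq_or_ne α 1 with h1 | h1
        · subst h1
          rw [J_pos p ψ hψadd x₀ hx₀ hx₀' m hmp 1 le_rfl,
            show (1:ℕ) - 1 = 0 from rfl, J_zero p ψ hψtriv m, Zb_zero, lam_unit]
          norm_num
        · rw [J_pos p ψ hψadd x₀ hx₀ hx₀' m hmp α hα,
            J_pos p ψ hψadd x₀ hx₀ hx₀' m hmp (α-1) (by omega), if_neg h1]
          norm_num
      have hBk : ∫ x in Bi k, ψ ((m:ℚ_[p]) * ((a k:ℚ_[p]) * x.1 + (b k:ℚ_[p]) * x.2)) ∂μ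
          = if α = 1 then (p:ℂ) - 1 else 0 := by
        have hBkeq : Bi k = Tmap p e₀ f₀ (a k) (b k) ⁻¹' (Sb p α ×ˢ Zb p (α-1)) := by
          rw [hBidef]
          exact shape_le' p e₀ f₀ (a k) (b k) hd0 α (α-1) (ppow_lt p (by omega))
        rw [hBkeq, eval_set p e₀ f₀ (a k) (b k) hd0 μ hμ hμ1 ψ m _,
          prod_integral_char p ψ m _ _]
        rcases eq_or_ne α 1 with h1 | h1
        · subst h1
          rw [show (1:ℕ) - 1 = 0 from rfl, J_zero p ψ hψtriv m, lam_Sb_one_toReal p]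
          push_cast
          norm_num
        · rw [J_pos p ψ hψadd x₀ hx₀ hx₀' m hmp (α-1) (by omega), if_neg h1, mul_zero]
      have hBne : ∀ i, i ≠ k →
          ∫ x in Bi i, ψ ((m:ℚ_[p]) * ((a k:ℚ_[p]) * x.1 + (b k:ℚ_[p]) * x.2)) ∂μ
            = if α = 1 then -1 else 0 := by
        intro i hik
        have hBieq : Bi i = Tmap p (a i) (b i) (a k) (b k) ⁻¹' (Zb p (α-1) ×ˢ Sb p α) := by
          rw [hBidef]
          exact shape_le p (a i) (b i) (a k) (b k) (hdjk i hik) α (α-1) (ppow_lt p (by omega))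
        rw [hBieq, eval_set p (a i) (b i) (a k) (b k) (hdjk i hik) μ hμ hμ1 ψ m _,
          prod_integral_char p ψ m _ _, hJS α hα]
        rcases eq_or_ne α 1 with h1 | h1
        · subst h1
          rw [show (1:ℕ) - 1 = 0 from rfl, Zb_zero, lam_unit]
          norm_num
        · rw [if_neg h1, mul_zero]
      have hsum : ∑ i, ∫ x in Bi i,
            ψ ((m:ℚ_[p]) * ((a k:ℚ_[p]) * x.1 + (b k:ℚ_[p]) * x.2)) ∂μ
          = (if α = 1 then (p:ℂ) - 1 else 0) + ((r:ℂ) - 1) * (if α = 1 then -1 else 0) := by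
        rw [← Finset.add_sum_erase _ _ (Finset.mem_univ k), hBk,
          Finset.sum_congr rfl (fun i hi => hBne i (Finset.ne_of_mem_erase hi)),
          Finset.sum_const, Finset.card_erase_of_mem (Finset.mem_univ k),
          Finset.card_univ, Fintype.card_fin, nsmul_eq_mul, Nat.cast_sub hr, Nat.cast_one]
      have hfinal : ∫ x in Utot p a b α,
            ψ ((m:ℚ_[p]) * ((a k:ℚ_[p]) * x.1 + (b k:ℚ_[p]) * x.2)) ∂μ
          = (∫ x in W, ψ ((m:ℚ_[p]) * ((a k:ℚ_[p]) * x.1 + (b k:ℚ_[p]) * x.2)) ∂μ)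
            - ∑ i, ∫ x in Bi i,
              ψ ((m:ℚ_[p]) * ((a k:ℚ_[p]) * x.1 + (b k:ℚ_[p]) * x.2)) ∂μ := by
        rw [hdec]; ring
      rw [hfinal, hW, hsum]
      rcases eq_or_ne α 1 with h1 | h1
      · subst h1
        simp only [reduceIte]
        ring
      · simp only [if_neg h1]
        ring
    constructor
    · have h := hUtot 1 le_rfl
      rw [if_pos rfl] at h
      simp_rw [hint]
      exact h
    · intro α hα2
      have h := hUtot α (by omega)
      rw [if_neg (by omega)] at h
      simp_rw [hint]
      exact h
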